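/- Let p, q be coprime positive integers and b an integer, and let G(p,b,q) = ∑_{r=0}^{q-1} e^{2πi(p r² + b r)/q} be the generalized quadratic Gauss sum. If q is odd, then |G(p,b,q)| = √q. -/

import Mathlib

open Complex

noncomputable def G (p : ℕ) (b : ℤ) (q : ℕ) : ℂ :=
  ∑ r ∈ Finset.range q,
    Complex.exp (2 * Real.pi * Complex.I * ((p * r ^ 2 + b * r : ℂ) / q))

/-- If `p, q` are coprime positive integers and `q` is odd, then the generalized
quadratic Gauss sum `G(p,b,q)` has modulus `√q`. -/
theorem abs_gauss_sum_odd (p q : ℕ) (b : ℤ) (hp : 0 < p) (hq : 0 < q)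
    (hcop : Nat.Coprime p q) (hodd : Odd q) :
    ‖G p b q‖ = Real.sqrt q := by
  have : NeZero q := ⟨hq.ne'⟩
  set ψ : AddChar (ZMod q) ℂ := ZMod.stdAddChar with hψdef
  have hprim : ψ.IsPrimitive := ZMod.isPrimitive_stdAddChar q
  set f : ZMod q → ZMod q := fun x => (p : ZMod q) * x ^ 2 + (b : ZMod q) * x with hf
  -- Step 1: rewrite G as a sum over ZMod q
  have hG : G p b q = ∑ x : ZMod q, ψ (f x) := by
    rw [G]
    refine (Finset.sum_nbij' (fun x => (ZMod.val x : ℕ)) (fun r => (r : ZMod q))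
      (fun x _ => Finset.mem_range.2 (ZMod.val_lt x)) (fun r _ => Finset.mem_univ _)
      (fun x _ => ZMod.natCast_zmod_val x) (fun r hr => ZMod.val_cast_of_lt (Finset.mem_range.1 hr))
      ?_).symm
    intro x _
    have h1 : f ((ZMod.val x : ℕ) : ZMod q) = (((p * (ZMod.val x)^2 + b * (ZMod.val x) : ℤ)) : ZMod q) := by
      push_cast
      ring
    conv_lhs => rw [← ZMod.natCast_zmod_val x, h1, ZMod.stdAddChar_coe]
    congr 1
    push_cast
    ring
  -- conjugate of ψ
  have hconj : ∀ a : ZMod q, (starRingEnd ℂ) (ψ a) = ψ (-a) := by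
    intro a
    have h1 : ‖ψ a‖ = 1 := by
      rw [hψdef, ZMod.stdAddChar_apply]; exact Circle.norm_coe _
    rw [AddChar.map_neg_eq_inv, ← Complex.inv_eq_conj h1]
  -- 2*p is a unit mod q
  have h2p : IsUnit ((2 * p : ℕ) : ZMod q) := by
    rw [ZMod.isUnit_iff_coprime]
    refine Nat.Coprime.mul ?_ hcop
    rw [Nat.Prime.coprime_iff_not_dvd Nat.prime_two]
    intro h
    have := Nat.odd_iff.mp hodd
    omega
  -- Step 2: the norm squared is q
  have key : ((‖G p b q‖) ^ 2 : ℂ) = (q : ℂ) := by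
    rw [show ((‖G p b q‖) ^ 2 : ℂ) = G p b q * (starRingEnd ℂ) (G p b q) by
      rw [Complex.mul_conj]; norm_cast; rw [Complex.sq_norm], hG]
    rw [map_sum]
    simp_rw [hconj]
    rw [Finset.sum_mul_sum]
    have hsplit : ∀ y x : ZMod q, ψ (f x) * ψ (-f y) = ψ (f x - f y) := by
      intro y x
      rw [← AddChar.map_add_eq_mul, sub_eq_add_neg]
    calc (∑ x : ZMod q, ∑ y : ZMod q, ψ (f x) * ψ (-f y))
        = ∑ y : ZMod q, ∑ x : ZMod q, ψ (f x - f y) := by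
          rw [Finset.sum_comm]
          exact Finset.sum_congr rfl fun y _ => Finset.sum_congr rfl fun x _ => hsplit y x
      _ = ∑ y : ZMod q, ∑ t : ZMod q, ψ (f (y + t) - f y) := by
          refine Finset.sum_congr rfl fun y _ => ?_
          exact (Fintype.sum_equiv (Equiv.addLeft y) _ _ fun t => rfl).symm
      _ = ∑ t : ZMod q, ψ ((p : ZMod q) * t ^ 2 + (b : ZMod q) * t) *
            ∑ y : ZMod q, ψ (y * ((2 * p : ℕ) * t)) := by
          rw [Finset.sum_comm]
          refine Finset.sum_congr rfl fun t _ => ?_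
          rw [Finset.mul_sum]
          refine Finset.sum_congr rfl fun y _ => ?_
          rw [← AddChar.map_add_eq_mul]
          congr 1
          simp only [hf]
          push_cast
          ring
      _ = ∑ t : ZMod q, ψ ((p : ZMod q) * t ^ 2 + (b : ZMod q) * t) *
            (if ((2 * p : ℕ) : ZMod q) * t = 0 then (Fintype.card (ZMod q) : ℂ) else 0) := by
          refine Finset.sum_congr rfl fun t _ => ?_
          rw [AddChar.sum_mulShift _ hprim]
          split_ifs <;> simp
      _ = (q : ℂ) := by
          rw [Finset.sum_congr rfl (fun t _ => ?_), Finset.sum_ite_eq' Finset.univ (0 : ZMod q)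
            (fun t => ψ ((p : ZMod q) * t ^ 2 + (b : ZMod q) * t) * (Fintype.card (ZMod q) : ℂ))]
          · simp [ZMod.card]
          · have : (((2 * p : ℕ) : ZMod q) * t = 0) ↔ t = 0 := by
              constructor
              · intro h
                exact (h2p.mul_right_eq_zero).1 h
              · intro h; rw [h, mul_zero]
            rw [mul_ite, mul_zero]
            simp_rw [this]
  have habs2 : (‖G p b q‖) ^ 2 = (q : ℝ) := by
    exact_mod_cast key
  rw [← habs2, Real.sqrt_sq (norm_nonneg _)]
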